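/- Let α ∈ (1/2,2/3), T > 0. There exists C such that for all 0 < r_j < r_{j−1} ≤ T, ∫_0^{r_j} (r_j − r)^{2α−2} (r_{j−1} − r)^{α−1} dr ≤ C (r_{j−1} − r_j)^{3α−2}. -/
import Mathlib


open MeasureTheory

private lemma aux_intble {b c p : ℝ} (hp : -1 < p) :
    IntervalIntegrable (fun r => (b - r) ^ p) volume c b := by
  have h := (intervalIntegral.intervalIntegrable_rpow' hp (a := 0) (b := b - c)).comp_sub_left b
  simpa using h.symm

private lemma aux_val {b c p : ℝ} (hc : c ≤ b) (hp : -1 < p) :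
    (∫ r in c..b, (b - r) ^ p) = (b - c) ^ (p + 1) / (p + 1) := by
  rw [intervalIntegral.integral_comp_sub_left (fun x => x ^ p) b]
  rw [integral_rpow (Or.inl hp)]
  rw [sub_self, Real.zero_rpow (by linarith)]
  ring

/-- Singular convolution estimate: for `α ∈ (1/2, 2/3)` and `0 < r_j < r_{j-1} ≤ T`,
`∫_0^{r_j} (r_j - r)^(2α-2) (r_{j-1} - r)^(α-1) dr ≤ C (r_{j-1} - r_j)^(3α-2)`. -/
theorem stmt_15 (α T : ℝ) (hα : α ∈ Set.Ioo (1 / 2 : ℝ) (2 / 3)) (hT : 0 < T) :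
    ∃ C : ℝ, ∀ rj rj1 : ℝ, 0 < rj → rj < rj1 → rj1 ≤ T →
      (∫ r in (0 : ℝ)..rj, (rj - r) ^ (2 * α - 2) * (rj1 - r) ^ (α - 1))
        ≤ C * (rj1 - rj) ^ (3 * α - 2) := by
  obtain ⟨hα1, hα2⟩ := hα
  have h2a : 0 < 2 * α - 1 := by linarith
  have h3a : 0 < 2 - 3 * α := by linarith
  refine ⟨1 / (2 * α - 1) + 1 / (2 - 3 * α), fun rj rj1 h0 h1 h2 => ?_⟩
  set δ := rj1 - rj with hδdef
  have hδ : 0 < δ := by linarith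
  set a : ℝ := max (rj - δ) 0 with ha_def
  have ha0 : 0 ≤ a := le_max_right _ _
  have harj : a ≤ rj := by
    apply max_le (by linarith) h0.le
  -- nonnegativity of integrands, measurability
  have hmeas : Measurable fun r : ℝ => (rj - r) ^ (2 * α - 2) * (rj1 - r) ^ (α - 1) := by
    fun_prop
  -- the dominating function on the upper piece
  set g : ℝ → ℝ := fun r => (rj - r) ^ (2 * α - 2) * δ ^ (α - 1) with hg_def
  have hg_int : ∀ c : ℝ, IntervalIntegrable g volume c rj := fun c =>
    (aux_intble (by linarith)).mul_const _
  -- pointwise bound f ≤ g on [0, rj]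
  have hfg : ∀ r ∈ Set.Icc (0 : ℝ) rj,
      (rj - r) ^ (2 * α - 2) * (rj1 - r) ^ (α - 1) ≤ g r := by
    intro r hr
    apply mul_le_mul_of_nonneg_left _ (Real.rpow_nonneg (by linarith [hr.2]) _)
    exact Real.rpow_le_rpow_of_nonpos hδ (by linarith [hr.2]) (by linarith)
  -- integrability of f on [0, rj]
  have hf_int : IntervalIntegrable
      (fun r => (rj - r) ^ (2 * α - 2) * (rj1 - r) ^ (α - 1)) volume 0 rj := by
    apply (hg_int 0).mono_fun' hmeas.aestronglyMeasurable
    filter_upwards [MeasureTheory.ae_restrict_mem measurableSet_Ioc] with r hr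
    rw [Set.uIoc_of_le h0.le] at hr
    have h1r : (0:ℝ) ≤ rj - r := by linarith [hr.2]
    have h2r : (0:ℝ) ≤ rj1 - r := by linarith [hr.2]
    rw [Real.norm_eq_abs, abs_of_nonneg (mul_nonneg (Real.rpow_nonneg h1r _)
      (Real.rpow_nonneg h2r _))]
    exact hfg r ⟨hr.1.le, hr.2⟩
  have hf_int1 : IntervalIntegrable
      (fun r => (rj - r) ^ (2 * α - 2) * (rj1 - r) ^ (α - 1)) volume 0 a :=
    hf_int.mono_set' (Set.uIoc_subset_uIoc_of_uIcc_subset_uIcc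
      (by rw [Set.uIcc_of_le h0.le, Set.uIcc_of_le ha0]; exact Set.Icc_subset_Icc le_rfl harj))
  have hf_int2 : IntervalIntegrable
      (fun r => (rj - r) ^ (2 * α - 2) * (rj1 - r) ^ (α - 1)) volume a rj :=
    hf_int.mono_set' (Set.uIoc_subset_uIoc_of_uIcc_subset_uIcc
      (by rw [Set.uIcc_of_le h0.le, Set.uIcc_of_le harj]; exact Set.Icc_subset_Icc ha0 le_rfl))
  -- split the integral
  rw [← intervalIntegral.integral_add_adjacent_intervals hf_int1 hf_int2]
  have hδp : (0:ℝ) ≤ δ ^ (3 * α - 2) := Real.rpow_nonneg hδ.le _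
  -- upper piece bound
  have hup : (∫ r in a..rj, (rj - r) ^ (2 * α - 2) * (rj1 - r) ^ (α - 1))
      ≤ 1 / (2 * α - 1) * δ ^ (3 * α - 2) := by
    have h1 : (∫ r in a..rj, (rj - r) ^ (2 * α - 2) * (rj1 - r) ^ (α - 1))
        ≤ ∫ r in a..rj, g r := by
      apply intervalIntegral.integral_mono_on harj hf_int2 (hg_int a)
      intro r hr
      exact hfg r ⟨le_trans ha0 hr.1, hr.2⟩
    have h2 : (∫ r in a..rj, g r) = (rj - a) ^ (2 * α - 1) / (2 * α - 1) * δ ^ (α - 1) := by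
      rw [hg_def, intervalIntegral.integral_mul_const, aux_val harj (by linarith),
        show 2 * α - 2 + 1 = 2 * α - 1 by ring]
    have h3 : (rj - a) ^ (2 * α - 1) ≤ δ ^ (2 * α - 1) := by
      apply Real.rpow_le_rpow (by linarith) _ h2a.le
      have : rj - δ ≤ a := le_max_left _ _
      linarith
    calc (∫ r in a..rj, (rj - r) ^ (2 * α - 2) * (rj1 - r) ^ (α - 1))
        ≤ (rj - a) ^ (2 * α - 1) / (2 * α - 1) * δ ^ (α - 1) := by rw [← h2]; exact h1
      _ ≤ δ ^ (2 * α - 1) / (2 * α - 1) * δ ^ (α - 1) := by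
          gcongr
      _ = 1 / (2 * α - 1) * δ ^ (3 * α - 2) := by
          rw [div_mul_eq_mul_div, ← Real.rpow_add hδ,
            show 2 * α - 1 + (α - 1) = 3 * α - 2 by ring]
          ring
  -- lower piece bound
  have hlow : (∫ r in (0:ℝ)..a, (rj - r) ^ (2 * α - 2) * (rj1 - r) ^ (α - 1))
      ≤ 1 / (2 - 3 * α) * δ ^ (3 * α - 2) := by
    rcases le_or_gt rj δ with hcase | hcase
    · -- a = 0, integral is 0
      have : a = 0 := by rw [ha_def]; apply max_eq_right; linarith
      rw [this, intervalIntegral.integral_same]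
      positivity
    · -- a = rj - δ > 0
      have haeq : a = rj - δ := by rw [ha_def]; apply max_eq_left; linarith
      have ha_pos : 0 < a := by rw [haeq]; linarith
      -- on [0, a], f r ≤ (rj - r)^(3α - 3)
      have hbd : ∀ r ∈ Set.Icc (0:ℝ) a,
          (rj - r) ^ (2 * α - 2) * (rj1 - r) ^ (α - 1) ≤ (rj - r) ^ (3 * α - 3) := by
        intro r hr
        have hr2 : r ≤ a := hr.2
        have hrjr : 0 < rj - r := by rw [haeq] at hr2; linarith
        have : (rj1 - r) ^ (α - 1) ≤ (rj - r) ^ (α - 1) :=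
          Real.rpow_le_rpow_of_nonpos hrjr (by linarith) (by linarith)
        calc (rj - r) ^ (2 * α - 2) * (rj1 - r) ^ (α - 1)
            ≤ (rj - r) ^ (2 * α - 2) * (rj - r) ^ (α - 1) :=
              mul_le_mul_of_nonneg_left this (Real.rpow_nonneg hrjr.le _)
          _ = (rj - r) ^ (3 * α - 3) := by
              rw [← Real.rpow_add hrjr, show 2 * α - 2 + (α - 1) = 3 * α - 3 by ring]
      -- integrability of the majorant on [0, a]
      have hmaj_int : IntervalIntegrable (fun r => (rj - r) ^ (3 * α - 3)) volume 0 a := by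
        apply ContinuousOn.intervalIntegrable
        apply ContinuousOn.rpow_const
        · exact (continuous_const.sub continuous_id).continuousOn
        · intro r hr
          rw [Set.uIcc_of_le ha0] at hr
          left
          have : r ≤ a := hr.2
          rw [haeq] at this
          intro h
          have : rj - r = 0 := h
          linarith
      have h1 : (∫ r in (0:ℝ)..a, (rj - r) ^ (2 * α - 2) * (rj1 - r) ^ (α - 1))
          ≤ ∫ r in (0:ℝ)..a, (rj - r) ^ (3 * α - 3) :=
        intervalIntegral.integral_mono_on ha0 hf_int1 hmaj_int hbd
      have h2 : (∫ r in (0:ℝ)..a, (rj - r) ^ (3 * α - 3))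
          = (rj ^ (3 * α - 2) - δ ^ (3 * α - 2)) / (3 * α - 2) := by
        rw [intervalIntegral.integral_comp_sub_left (fun x => x ^ (3 * α - 3)) rj]
        rw [haeq, sub_sub_cancel, sub_zero]
        rw [integral_rpow (Or.inr ⟨by intro h; linarith [h],
          by rw [Set.uIcc_of_le (by linarith : δ ≤ rj)]
             exact fun h => absurd h.1 (by linarith)⟩),
          show 3 * α - 3 + 1 = 3 * α - 2 by ring]
      have h3 : (rj ^ (3 * α - 2) - δ ^ (3 * α - 2)) / (3 * α - 2)
          ≤ 1 / (2 - 3 * α) * δ ^ (3 * α - 2) := by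
        rw [div_le_iff_of_neg (by linarith : 3 * α - 2 < 0)]
        have hrjpow : 0 ≤ rj ^ (3 * α - 2) := Real.rpow_nonneg h0.le _
        have : 1 / (2 - 3 * α) * δ ^ (3 * α - 2) * (3 * α - 2)
            = -(δ ^ (3 * α - 2)) := by field_simp; ring
        rw [this]
        linarith
      linarith
  -- combine
  calc (∫ r in (0:ℝ)..a, (rj - r) ^ (2 * α - 2) * (rj1 - r) ^ (α - 1))
        + ∫ r in a..rj, (rj - r) ^ (2 * α - 2) * (rj1 - r) ^ (α - 1)
      ≤ 1 / (2 - 3 * α) * δ ^ (3 * α - 2) + 1 / (2 * α - 1) * δ ^ (3 * α - 2) :=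
        add_le_add hlow hup
    _ = (1 / (2 * α - 1) + 1 / (2 - 3 * α)) * (rj1 - rj) ^ (3 * α - 2) := by
        rw [← hδdef]; ring
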